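/- (Strong duality for the sphere-constrained quadratic problem, case K = ℝⁿ.) Let d, n ≥ 1 and A ∈ ℝ^{d×n}. Then sup over v ∈ ℝ of inf{ (1/2)‖Ax‖₂² + v(‖x‖₂² − 1) : x ∈ ℝⁿ, ‖x‖₂ ≤ 1 } equals inf{ (1/2)‖Ax‖₂² : x ∈ ℝⁿ, ‖x‖₂ = 1 }, which is (1/2)·λ_min(AᵀA), one half the smallest eigenvalue of AᵀA. In particular, strong duality holds despite the nonconvex spherical constraint. -/

import Mathlib

open Matrix
open scoped RealInnerProductSpace

section aux
variable {d n : ℕ} (A : Matrix (Fin d) (Fin n) ℝ)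

lemma toEuc_G (w : EuclideanSpace ℝ (Fin n)) : Matrix.toEuclideanLin (Aᴴ * A) w
    = LinearMap.adjoint (Matrix.toEuclideanLin A) (Matrix.toEuclideanLin A w) := by
  rw [← Matrix.toEuclideanLin_conjTranspose_eq_adjoint]
  ext k
  simp [Matrix.toEuclideanLin_apply, Matrix.mulVec_mulVec]

lemma quad_eq (x : EuclideanSpace ℝ (Fin n)) :
    ‖Matrix.toEuclideanLin A x‖ ^ 2 = ⟪x, Matrix.toEuclideanLin (Aᴴ * A) x⟫ := by
  rw [toEuc_G, LinearMap.adjoint_inner_right, real_inner_self_eq_norm_sq]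

lemma repr_G (x : EuclideanSpace ℝ (Fin n)) (j : Fin n) :
    (Matrix.isHermitian_conjTranspose_mul_self A).eigenvectorBasis.repr
        (Matrix.toEuclideanLin (Aᴴ * A) x) j
      = (Matrix.isHermitian_conjTranspose_mul_self A).eigenvalues j *
        (Matrix.isHermitian_conjTranspose_mul_self A).eigenvectorBasis.repr x j := by
  set hA := Matrix.isHermitian_conjTranspose_mul_self A
  set b := hA.eigenvectorBasis
  have hGb : Matrix.toEuclideanLin (Aᴴ * A) (b j)
      = hA.eigenvalues j • (b j : EuclideanSpace ℝ (Fin n)) := by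
    ext k
    have h := congrFun (hA.mulVec_eigenvectorBasis j) k
    simp only [Matrix.toEuclideanLin_apply, PiLp.smul_apply,
      smul_eq_mul, Pi.smul_apply] at h ⊢
    exact h
  have hsa : ⟪(b j : EuclideanSpace ℝ (Fin n)), Matrix.toEuclideanLin (Aᴴ * A) x⟫
      = ⟪Matrix.toEuclideanLin (Aᴴ * A) (b j), x⟫ := by
    rw [toEuc_G, toEuc_G, LinearMap.adjoint_inner_right, LinearMap.adjoint_inner_left]
  rw [b.repr_apply_apply, b.repr_apply_apply, hsa, hGb, real_inner_smul_left]

lemma quad_sum (x : EuclideanSpace ℝ (Fin n)) :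
    ‖Matrix.toEuclideanLin A x‖ ^ 2
      = ∑ j, (Matrix.isHermitian_conjTranspose_mul_self A).eigenvalues j *
          ((Matrix.isHermitian_conjTranspose_mul_self A).eigenvectorBasis.repr x j) ^ 2 := by
  set hA := Matrix.isHermitian_conjTranspose_mul_self A
  set b := hA.eigenvectorBasis
  rw [quad_eq, ← b.repr.inner_map_map x (Matrix.toEuclideanLin (Aᴴ * A) x), PiLp.inner_apply]
  refine Finset.sum_congr rfl fun j _ => ?_
  rw [repr_G]
  simp [RCLike.inner_apply]
  rw [sq, ← mul_assoc]
  rfl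

lemma norm_sum (x : EuclideanSpace ℝ (Fin n)) :
    ‖x‖ ^ 2 = ∑ j, ((Matrix.isHermitian_conjTranspose_mul_self A).eigenvectorBasis.repr x j) ^ 2 := by
  set b := (Matrix.isHermitian_conjTranspose_mul_self A).eigenvectorBasis
  rw [← real_inner_self_eq_norm_sq, ← b.repr.inner_map_map x x, PiLp.inner_apply]
  refine Finset.sum_congr rfl fun j _ => ?_
  simp [RCLike.inner_apply]
end aux

theorem strong_duality_sphere (d n : ℕ) (hd : 1 ≤ d) (hn : 1 ≤ n)
    (A : Matrix (Fin d) (Fin n) ℝ) :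
    sSup {r : ℝ | ∃ v : ℝ,
        r = sInf {s : ℝ | ∃ x : EuclideanSpace ℝ (Fin n), ‖x‖ ≤ 1 ∧
          s = (1 / 2) * ‖Matrix.toEuclideanLin A x‖ ^ 2 + v * (‖x‖ ^ 2 - 1)}}
      = sInf {s : ℝ | ∃ x : EuclideanSpace ℝ (Fin n), ‖x‖ = 1 ∧
          s = (1 / 2) * ‖Matrix.toEuclideanLin A x‖ ^ 2} ∧
    sInf {s : ℝ | ∃ x : EuclideanSpace ℝ (Fin n), ‖x‖ = 1 ∧
          s = (1 / 2) * ‖Matrix.toEuclideanLin A x‖ ^ 2}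
      = (1 / 2) * ⨅ i : Fin n, (Matrix.isHermitian_conjTranspose_mul_self A).eigenvalues i := by
  have hne : Nonempty (Fin n) := ⟨⟨0, hn⟩⟩
  set hA := Matrix.isHermitian_conjTranspose_mul_self A with hAdef
  set μ := ⨅ i : Fin n, hA.eigenvalues i with hμdef
  set b := hA.eigenvectorBasis with hbdef
  set T := Matrix.toEuclideanLin A with hTdef
  have hμle : ∀ i, μ ≤ hA.eigenvalues i := fun i =>
    ciInf_le (Set.Finite.bddBelow (Set.finite_range _)) i
  obtain ⟨i0, hi0⟩ := exists_eq_ciInf_of_finite (f := hA.eigenvalues)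
  have hb1 : ‖(b i0 : EuclideanSpace ℝ (Fin n))‖ = 1 := b.orthonormal.1 i0
  have hq0 : ‖T (b i0)‖ ^ 2 = μ := by
    rw [hTdef, quad_sum A (b i0)]
    rw [show (Matrix.isHermitian_conjTranspose_mul_self A).eigenvectorBasis = b from rfl]
    simp only [b.repr_self, EuclideanSpace.single_apply]
    rw [Finset.sum_eq_single i0]
    · simpa using hi0.trans hμdef.symm
    · intro j _ hj
      simp only [ite_pow, one_pow, zero_pow, mul_ite, mul_one, mul_zero]
      split
      · next h => exact absurd h hj
      · ring
    · simp
  have hlb : ∀ x : EuclideanSpace ℝ (Fin n), μ * ‖x‖ ^ 2 ≤ ‖T x‖ ^ 2 := by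
    intro x
    rw [hTdef, quad_sum A x, norm_sum A x, Finset.mul_sum]
    exact Finset.sum_le_sum fun j _ => mul_le_mul_of_nonneg_right (hμle j) (sq_nonneg _)
  -- second conjunct
  set S : Set ℝ := {s : ℝ | ∃ x : EuclideanSpace ℝ (Fin n), ‖x‖ = 1 ∧
      s = (1 / 2) * ‖T x‖ ^ 2} with hSdef
  have hmemS : (1 / 2) * μ ∈ S := ⟨b i0, hb1, by rw [hq0]⟩
  have hlbS : ∀ s ∈ S, (1 / 2) * μ ≤ s := by
    rintro s ⟨x, hx, rfl⟩
    have := hlb x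
    rw [hx] at this
    nlinarith
  have h2 : sInf S = (1 / 2) * μ :=
    le_antisymm (csInf_le ⟨_, hlbS⟩ hmemS) (le_csInf ⟨_, hmemS⟩ hlbS)
  refine ⟨?_, h2⟩
  rw [h2]
  -- first conjunct: sSup = μ/2
  set P : ℝ → Set ℝ := fun v => {s : ℝ | ∃ x : EuclideanSpace ℝ (Fin n), ‖x‖ ≤ 1 ∧
      s = (1 / 2) * ‖T x‖ ^ 2 + v * (‖x‖ ^ 2 - 1)} with hPdef
  have hPbdd : ∀ v, BddBelow (P v) := by
    intro v
    refine ⟨-|v|, ?_⟩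
    rintro s ⟨x, hx, rfl⟩
    have h1 : -v ≤ |v| := neg_le_abs v
    have h2' : v ≤ |v| := le_abs_self v
    have hx2 : ‖x‖ ^ 2 ≤ 1 := by nlinarith [norm_nonneg x]
    have hx0 : (0:ℝ) ≤ ‖x‖ ^ 2 := sq_nonneg _
    nlinarith [sq_nonneg ‖T x‖]
  have hPmem : ∀ v, (1 / 2) * μ ∈ P v := by
    intro v
    refine ⟨b i0, le_of_eq hb1, ?_⟩
    rw [hq0, hb1]
    ring
  have hub : ∀ r ∈ {r : ℝ | ∃ v : ℝ, r = sInf (P v)}, r ≤ (1 / 2) * μ := by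
    rintro r ⟨v, rfl⟩
    exact csInf_le (hPbdd v) (hPmem v)
  have hmemSup : (1 / 2) * μ ∈ {r : ℝ | ∃ v : ℝ, r = sInf (P v)} := by
    refine ⟨-((1 / 2) * μ), ?_⟩
    refine (le_antisymm (csInf_le (hPbdd _) (hPmem _)) (le_csInf ⟨_, hPmem _⟩ ?_)).symm
    rintro s ⟨x, hx, rfl⟩
    have := hlb x
    nlinarith
  exact le_antisymm (csSup_le ⟨_, hmemSup⟩ hub) (le_csSup ⟨_, hub⟩ hmemSup)
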